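/- Let O ⊆ P contain A. For any (i,j) ∈ P one has |r(i,j)| ≥ i and |r(i,j)| ⩽̇ −j (i.e. |r(i,j)| ≤ −j in the order 1 ⋖ … ⋖ n ⋖ −n ⋖ … ⋖ −1, where |r(i,j)| is interpreted as a positive element and −j is also compared in this order). -/

import Mathlib

open scoped Classical Pointwise

noncomputable section

/-- Position of `j` in the total order `1 ⋖ … ⋖ n ⋖ -n ⋖ … ⋖ -1` on `N`. -/
def ordKey (n : ℕ) (j : ℤ) : ℤ := if 0 < j then j else 2 * n + 1 + j

/-- Membership in the type C Gelfand–Tsetlin poset `P`: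
pairs `(i,j)` with `1 ≤ i ≤ n` and `i ≤ |j| ≤ n`. -/
def inP (n : ℕ) (p : ℤ × ℤ) : Prop :=
  1 ≤ p.1 ∧ p.1 ≤ (n : ℤ) ∧ p.1 ≤ |p.2| ∧ |p.2| ≤ (n : ℤ)

/-- The order relation `⪯` of `P`: `(i₁,j₁) ⪯ (i₂,j₂)` iff `i₁ ≤ i₂` and `j₁ ⩽̇ j₂`. -/
def ple (n : ℕ) (p q : ℤ × ℤ) : Prop :=
  p.1 ≤ q.1 ∧ ordKey n p.2 ≤ ordKey n q.2

/-- Strict version of `⪯`. -/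
def plt (n : ℕ) (p q : ℤ × ℤ) : Prop := ple n p q ∧ p ≠ q

/-- The elements of `N = {1,…,n,-n,…,-1}` listed in increasing `⋖` order. -/
def jList (n : ℕ) : List ℤ :=
  ((List.range n).map fun t => (t : ℤ) + 1) ++ ((List.range n).map fun t => (t : ℤ) - n)

/-- All pairs `(i,j)` with `i ∈ [1,n]`, `j ∈ N`, ordered first by `i` increasing,
then by `j` increasing with respect to `⋖`. -/
def posList (n : ℕ) : List (ℤ × ℤ) :=
  (List.range n).flatMap fun a => (jList n).map fun j => ((a : ℤ) + 1, j)

/-- `P` as a finite set. -/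
def Pfin (n : ℕ) : Finset (ℤ × ℤ) := (posList n).toFinset.filter (inP n)

/-- `N` as a finite set. -/
def Nfin (n : ℕ) : Finset ℤ := (jList n).toFinset

/-- The diagonal `A = {(i,i) : 1 ≤ i ≤ n}`. -/
def Aset (n : ℕ) : Finset (ℤ × ℤ) :=
  (Finset.range n).image fun t => (((t : ℤ) + 1, (t : ℤ) + 1) : ℤ × ℤ)

/-- Order ideals (downward closed subsets) of `P`. -/
def IsIdeal (n : ℕ) (J : Finset (ℤ × ℤ)) : Prop :=
  (∀ p ∈ J, inP n p) ∧ ∀ p ∈ J, ∀ q ∈ Pfin n, ple n q p → q ∈ J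

/-- The set of `≺`-maximal elements of `J`. -/
def maxPrec (n : ℕ) (J : Finset (ℤ × ℤ)) : Finset (ℤ × ℤ) :=
  J.filter fun p => ∀ q ∈ J, ple n p q → q = p

/-- `M_O(J) = (J ∩ O) ∪ max_≺(J)`. -/
def MO (n : ℕ) (O J : Finset (ℤ × ℤ)) : Finset (ℤ × ℤ) := (J ∩ O) ∪ maxPrec n J

/-- The permutation `w_M`: the product of the transpositions `s_{i,j}` over `(i,j) ∈ M`,
ordered first by `i` increasing and then by `j` increasing with respect to `⋖`
(the leftmost factor acts last). -/
def wPerm (n : ℕ) (M : Finset (ℤ × ℤ)) : Equiv.Perm ℤ :=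
  (((posList n).filter fun p => decide (p ∈ M)).map fun p => Equiv.swap p.1 p.2).prod

/-- `w^{O,J} = w_O⁻¹ ⬝ w_{M_O(J)}`. -/
def wOJ (n : ℕ) (O J : Finset (ℤ × ℤ)) : Equiv.Perm ℤ :=
  (wPerm n O)⁻¹ * wPerm n (MO n O J)

/-- The principal order ideal `⟨i,j⟩` of `(i,j) ∈ P`. -/
def princ (n : ℕ) (p : ℤ × ℤ) : Finset (ℤ × ℤ) := (Pfin n).filter fun q => ple n q p

/-- `r(i,j) = w^{O,⟨i,j⟩}(i)`. -/
def rMap (n : ℕ) (O : Finset (ℤ × ℤ)) (i j : ℤ) : ℤ := wOJ n O (princ n (i, j)) i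

/-- Inverse of `ordKey` (on the relevant range `[1, 2n]`). -/
def invOrdKey (n : ℕ) (t : ℤ) : ℤ := if t ≤ (n : ℤ) then t else t - (2 * n + 1)

/-- The `⋖`-maximal `j'` with `j' ⋖ j` and `(i,j') ∈ O`. -/
def prevO (n : ℕ) (O : Finset (ℤ × ℤ)) (i j : ℤ) : ℤ :=
  invOrdKey n (((((Nfin n).filter fun j' => (i, j') ∈ O ∧ ordKey n j' < ordKey n j).image
    (ordKey n)).max).unbotD 0)

/-- The pipe-dream linear transform `ξ` of `ℝ^P` (coordinates outside `P` are untouched):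
`ξ(ε_{i,i}) = ε_{i,r(i,i)}` and `ξ(ε_{i,j}) = ε_{i,r(i,j)} - ε_{i,r(i,j')}` for `j ≠ i`,
where `j'` is `⋖`-maximal with `j' ⋖ j` and `(i,j') ∈ O`. -/
def xiMap (n : ℕ) (O : Finset (ℤ × ℤ)) (x : (ℤ × ℤ) → ℝ) : (ℤ × ℤ) → ℝ := fun q =>
  if inP n q then
    (∑ j ∈ (Nfin n).filter (fun j => inP n (q.1, j) ∧ rMap n O q.1 j = q.2), x (q.1, j))
    - (∑ j ∈ (Nfin n).filter
        (fun j => inP n (q.1, j) ∧ j ≠ q.1 ∧ rMap n O q.1 (prevO n O q.1 j) = q.2), x (q.1, j))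
  else x q

/-- Indicator vector `1_{M_O(J)} ∈ ℝ^P`. -/
def indicMO (n : ℕ) (O J : Finset (ℤ × ℤ)) : (ℤ × ℤ) → ℝ := fun p =>
  if p ∈ MO n O J then 1 else 0

/-- The fundamental marked chain-order polytope `𝒬_O(ω_k)`:
the convex hull of the vectors `1_{M_O(J)}`, `J ∈ 𝒥ₖ`. -/
def QOfund (n : ℕ) (O : Finset (ℤ × ℤ)) (k : ℕ) : Set ((ℤ × ℤ) → ℝ) :=
  convexHull ℝ {x | ∃ J : Finset (ℤ × ℤ),
    IsIdeal n J ∧ (J ∩ Aset n).card = k ∧ x = indicMO n O J}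

/-- The marked chain-order polytope `𝒬_O(λ)` for `λ = a₁ω₁ + … + a_nω_n`:
the Minkowski sum `a₁𝒬_O(ω₁) + … + a_n𝒬_O(ω_n)`. -/
def QO (n : ℕ) (O : Finset (ℤ × ℤ)) (a : ℕ → ℕ) : Set ((ℤ × ℤ) → ℝ) :=
  ∑ k ∈ Finset.Icc 1 n, a k • QOfund n O k

/-- Integrality (lattice point) predicate. -/
def IsLat (x : (ℤ × ℤ) → ℝ) : Prop := ∀ p, ∃ m : ℤ, x p = m

/-- Type B: `λ(i) = a_i + … + a_{n-1} + a_n/2`. -/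
def lamB (n : ℕ) (a : ℕ → ℕ) (i : ℤ) : ℝ :=
  (∑ t ∈ Finset.Icc i.toNat (n - 1), (a t : ℝ)) + (a n : ℝ) / 2

/-- The type B poset polytope `𝒬^B_O(λ)` (H-description with factor `1/2`
on the coordinates in `B = {(i,-i)}`). -/
def QB (n : ℕ) (O : Finset (ℤ × ℤ)) (lam : ℤ → ℝ) : Set ((ℤ × ℤ) → ℝ) :=
  {x | (∀ i : ℤ, 1 ≤ i → i ≤ (n : ℤ) → x (i, i) = lam i) ∧
    (∀ p, inP n p → 0 ≤ x p) ∧ (∀ p, ¬ inP n p → x p = 0) ∧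
    ∀ (pq rs : ℤ × ℤ) (c : List (ℤ × ℤ)), pq ∈ O → inP n rs →
      (∀ q ∈ c, inP n q ∧ q ∉ O) →
      List.Chain' (plt n) (pq :: (c ++ [rs])) →
      (c.map x).sum ≤ x pq - (if rs.2 = -rs.1 then (1 : ℝ) / 2 else 1) * x rs}

/-- The point `x^{J,D}`. -/
def xJD (n : ℕ) (O J : Finset (ℤ × ℤ)) (D : Finset ℤ) : (ℤ × ℤ) → ℝ := fun p =>
  if p ∈ MO n O J then (if p.2 = -p.1 ∧ p.1 ∉ D then 2 else 1) else 0

/-- The projection `π : ℝ^P → ℝ^{P∖A}` (realized by zeroing the `A`-coordinates). -/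
def piA (x : (ℤ × ℤ) → ℝ) : (ℤ × ℤ) → ℝ := fun p => if p.2 = p.1 then 0 else x p

/-- The transformed type B poset polytope `Π^B_O(λ) = πξ(𝒬^B_O(λ))`. -/
def PiB (n : ℕ) (O : Finset (ℤ × ℤ)) (a : ℕ → ℕ) : Set ((ℤ × ℤ) → ℝ) :=
  (fun x => piA (xiMap n O x)) '' QB n O (lamB n a)

/-- The point `y^D ∈ ℝ^{P∖A}`. -/
def yD (D : Finset ℤ) : (ℤ × ℤ) → ℝ := fun p => if p.2 = -p.1 ∧ p.1 ∈ D then 1 else 0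

section StmtAux

private def swL (r : ℤ) (l : List ℤ) : Equiv.Perm ℤ := (l.map fun c => Equiv.swap r c).prod

private lemma swL_nil (r : ℤ) : swL r [] = 1 := rfl

private lemma swL_cons (r c : ℤ) (l : List ℤ) :
    swL r (c :: l) = Equiv.swap r c * swL r l := by
  simp [swL]

private lemma swL_append (r : ℤ) (l₁ l₂ : List ℤ) :
    swL r (l₁ ++ l₂) = swL r l₁ * swL r l₂ := by
  simp [swL]

private lemma swap_apply_cases (r c x : ℤ) :
    Equiv.swap r c x = x ∨ Equiv.swap r c x = r ∨ Equiv.swap r c x = c := by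
  rcases eq_or_ne x r with h | h
  · subst h; right; right; exact Equiv.swap_apply_left _ _
  rcases eq_or_ne x c with h2 | h2
  · subst h2; right; left; exact Equiv.swap_apply_right _ _
  · left; exact Equiv.swap_apply_of_ne_of_ne h h2

private lemma swL_apply_notmem {r v : ℤ} {l : List ℤ} (hr : v ≠ r) (hl : v ∉ l) :
    swL r l v = v := by
  induction l with
  | nil => rfl
  | cons c l ih =>
    simp only [List.mem_cons, not_or] at hl
    rw [swL_cons, Equiv.Perm.mul_apply, ih hl.2]
    exact Equiv.swap_apply_of_ne_of_ne hr hl.1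

private lemma swL_apply_mem (r : ℤ) {l : List ℤ} (v : ℤ) :
    swL r l v = v ∨ swL r l v = r ∨ swL r l v ∈ l := by
  induction l with
  | nil => left; rfl
  | cons c l ih =>
    rw [swL_cons, Equiv.Perm.mul_apply]
    rcases swap_apply_cases r c (swL r l v) with h | h | h
    · rw [h]; rcases ih with h' | h' | h' <;> simp [h']
    · rw [h]; right; left; rfl
    · rw [h]; right; right; simp

private lemma swL_inv_cons (r c v : ℤ) (l : List ℤ) :
    (swL r (c :: l))⁻¹ v = (swL r l)⁻¹ (Equiv.swap r c v) := by
  rw [swL_cons, mul_inv_rev, Equiv.Perm.mul_apply, Equiv.swap_inv]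

private lemma swL_inv_notmem {r v : ℤ} {l : List ℤ} (hr : v ≠ r) (hl : v ∉ l) :
    (swL r l)⁻¹ v = v := by
  induction l with
  | nil => rfl
  | cons c l ih =>
    simp only [List.mem_cons, not_or] at hl
    rw [swL_inv_cons, Equiv.swap_apply_of_ne_of_ne hr hl.1]
    exact ih hl.2

private lemma swL_inv_mem (r : ℤ) {l : List ℤ} (v : ℤ) :
    (swL r l)⁻¹ v = v ∨ (swL r l)⁻¹ v = r ∨ (swL r l)⁻¹ v ∈ l := by
  induction l generalizing v with
  | nil => left; rfl
  | cons c l ih =>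
    rw [swL_inv_cons]
    rcases swap_apply_cases r c v with h | h | h <;> rw [h]
    · rcases ih v with h' | h' | h' <;> simp only [Equiv.Perm.inv_def] at h' <;> simp [h']
    · rcases ih r with h' | h' | h' <;> simp only [Equiv.Perm.inv_def] at h' <;> simp [h']
    · rcases ih c with h' | h' | h' <;> simp only [Equiv.Perm.inv_def] at h' <;> simp [h']

private lemma swL_inv_sorted (n : ℕ) {r v : ℤ} {l : List ℤ}
    (hl : l.Pairwise fun a b => ordKey n a < ordKey n b) (hv : v ≠ r) :
    (swL r l)⁻¹ v = v ∨ (swL r l)⁻¹ v = r ∨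
      ((swL r l)⁻¹ v ∈ l ∧ ordKey n v < ordKey n ((swL r l)⁻¹ v)) := by
  induction l with
  | nil => left; rfl
  | cons c l ih =>
    rw [List.pairwise_cons] at hl
    rw [swL_inv_cons]
    rcases eq_or_ne v c with hvc | hvc
    · subst hvc
      rw [Equiv.swap_apply_right]
      rcases swL_inv_mem r (l := l) r with h | h | h
      · rw [h]; right; left; rfl
      · rw [h]; right; left; rfl
      · right; right; exact ⟨List.mem_cons_of_mem _ h, hl.1 _ h⟩
    · rw [Equiv.swap_apply_of_ne_of_ne hv hvc]
      rcases ih hl.2 with h | h | h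
      · left; exact h
      · right; left; exact h
      · right; right; exact ⟨List.mem_cons_of_mem _ h.1, h.2⟩

private lemma filter_split_key (n : ℕ) (B : ℤ) (p : ℤ → Bool) :
    ∀ (l : List ℤ), (l.Pairwise fun a b => ordKey n a < ordKey n b) →
      l.filter p = (l.filter fun c => p c && decide (ordKey n c ≤ B))
        ++ l.filter fun c => p c && !decide (ordKey n c ≤ B)
  | [], _ => rfl
  | c :: l, hl => by
    rw [List.pairwise_cons] at hl
    have ih := filter_split_key n B p l hl.2
    by_cases hp : p c = true
    · by_cases hB : ordKey n c ≤ B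
      · have d1 : (p c && decide (ordKey n c ≤ B)) = true := by simp [hp, hB]
        have d2 : ¬ ((p c && !decide (ordKey n c ≤ B)) = true) := by simp [hp, hB]
        rw [List.filter_cons, List.filter_cons, List.filter_cons, if_pos hp, if_pos d1,
          if_neg d2, List.cons_append]
        exact congrArg (c :: ·) ih
      · have d1 : ¬ ((p c && decide (ordKey n c ≤ B)) = true) := by simp [hp, hB]
        have d2 : (p c && !decide (ordKey n c ≤ B)) = true := by simp [hp, hB]
        have h1 : (l.filter fun a => p a && decide (ordKey n a ≤ B)) = [] := by
          rw [List.filter_eq_nil_iff]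
          intro a ha
          have := hl.1 a ha
          simp only [Bool.and_eq_true, decide_eq_true_eq, not_and]
          intro _; omega
        have h2 : (l.filter fun a => p a && !decide (ordKey n a ≤ B)) = l.filter p := by
          apply List.filter_congr
          intro a ha
          have := hl.1 a ha
          have hd : decide (ordKey n a ≤ B) = false := by
            simp only [decide_eq_false_iff_not]; omega
          rw [hd]; simp
        rw [List.filter_cons, List.filter_cons, List.filter_cons, if_pos hp, if_neg d1,
          if_pos d2, h1, h2, List.nil_append]
    · have d1 : ¬ ((p c && decide (ordKey n c ≤ B)) = true) := by simp [hp]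
      have d2 : ¬ ((p c && !decide (ordKey n c ≤ B)) = true) := by simp [hp]
      rw [List.filter_cons, List.filter_cons, List.filter_cons, if_neg hp, if_neg d1, if_neg d2]
      exact ih

private lemma filter_eq_single (n : ℕ) {j : ℤ} :
    ∀ {l : List ℤ}, (l.Pairwise fun a b => ordKey n a < ordKey n b) → j ∈ l →
      l.filter (fun c => decide (c = j)) = [j]
  | [], _, hj => by simp at hj
  | c :: l, hl, hj => by
    rw [List.pairwise_cons] at hl
    rcases eq_or_ne c j with rfl | hcj
    · have h1 : (l.filter fun a => decide (a = c)) = [] := by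
        rw [List.filter_eq_nil_iff]
        intro a ha
        have := hl.1 a ha
        simp only [decide_eq_true_eq]
        intro h; subst h; omega
      rw [List.filter_cons, if_pos (by simp), h1]
    · have hj' : j ∈ l := by
        rcases List.mem_cons.mp hj with h | h
        · exact absurd h.symm hcj
        · exact h
      rw [List.filter_cons, if_neg (by simp [hcj])]
      exact filter_eq_single n hl.2 hj'

private lemma coeL : ∀ (l : List ℕ), (do let a ← l; pure ((a : ℤ))) = l.map (fun a : ℕ => (a : ℤ))
  | [] => rfl
  | a :: l => by
    show List.flatMap _ _ = _
    rw [List.flatMap_cons, List.map_cons, ← coeL l]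
    rfl

private lemma jList_eq (n : ℕ) :
    jList n = ((List.range n).map fun t : ℕ => (t : ℤ) + 1)
      ++ ((List.range n).map fun t : ℕ => (t : ℤ) - n) := by
  unfold jList
  rw [coeL, List.map_map, List.map_map]
  rfl

private lemma mem_jList {n : ℕ} {c : ℤ} :
    c ∈ jList n ↔ (1 ≤ c ∧ c ≤ n) ∨ (-n ≤ c ∧ c ≤ -1) := by
  rw [jList_eq]
  simp only [List.mem_append, List.mem_map, List.mem_range]
  constructor
  · rintro (⟨t, ht, rfl⟩ | ⟨t, ht, rfl⟩)
    · left; omega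
    · right; omega
  · rintro (⟨h1, h2⟩ | ⟨h1, h2⟩)
    · left; exact ⟨(c - 1).toNat, by omega, by omega⟩
    · right; exact ⟨(c + n).toNat, by omega, by omega⟩

private lemma jList_pairwise (n : ℕ) :
    (jList n).Pairwise fun a b => ordKey n a < ordKey n b := by
  have key1 : ∀ t : ℕ, ordKey n ((t : ℤ) + 1) = (t : ℤ) + 1 := by
    intro t; simp only [ordKey]; rw [if_pos (by omega)]
  have key2 : ∀ t : ℕ, t < n → ordKey n ((t : ℤ) - n) = (n : ℤ) + 1 + t := by
    intro t ht; simp only [ordKey]; rw [if_neg (by omega)]; omega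
  rw [jList_eq, List.pairwise_append]
  refine ⟨?_, ?_, ?_⟩
  · rw [List.pairwise_map]
    exact (List.pairwise_lt_range (n := n)).imp (fun {a b} h => by rw [key1 a, key1 b]; omega)
  · rw [List.pairwise_map]
    refine List.Pairwise.imp_of_mem ?_ (List.pairwise_lt_range (n := n))
    intro a b ha hb h
    rw [List.mem_range] at ha hb
    rw [key2 a ha, key2 b hb]; omega
  · intro x hx y hy
    simp only [List.mem_map, List.mem_range] at hx hy
    obtain ⟨s, hs, rfl⟩ := hx
    obtain ⟨t, ht, rfl⟩ := hy
    rw [key1 s, key2 t ht]; omega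

private lemma ordKey_inj {n : ℕ} {c c' : ℤ} (hc : c ∈ jList n) (hc' : c' ∈ jList n)
    (h : ordKey n c = ordKey n c') : c = c' := by
  rw [mem_jList] at hc hc'
  simp only [ordKey] at h
  split_ifs at h <;> omega

private lemma mem_posList {n : ℕ} {x y : ℤ} :
    (x, y) ∈ posList n ↔ (1 ≤ x ∧ x ≤ n ∧ y ∈ jList n) := by
  simp only [posList, coeL, List.flatMap_map, List.mem_flatMap, List.mem_map, List.mem_range]
  constructor
  · rintro ⟨a, ha, j, hj, he⟩
    rw [Prod.ext_iff] at he
    simp only at he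
    obtain ⟨h1, h2⟩ := he
    subst h2
    constructor
    · omega
    constructor
    · omega
    · exact hj
  · rintro ⟨h1, h2, h3⟩
    exact ⟨(x - 1).toNat, by omega, y, h3, by rw [Prod.ext_iff]; constructor <;> simp <;> omega⟩

private def rowL (n : ℕ) (S : Finset (ℤ × ℤ)) (r : ℤ) : List ℤ :=
  (jList n).filter fun c => decide ((r, c) ∈ S)

private lemma mem_rowL {n : ℕ} {S : Finset (ℤ × ℤ)} {r c : ℤ} :
    c ∈ rowL n S r ↔ c ∈ jList n ∧ (r, c) ∈ S := by
  simp [rowL]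

private lemma rowL_pairwise (n : ℕ) (S : Finset (ℤ × ℤ)) (r : ℤ) :
    (rowL n S r).Pairwise fun a b => ordKey n a < ordKey n b :=
  (jList_pairwise n).filter _

private def WB (n : ℕ) (S : Finset (ℤ × ℤ)) (s k : ℕ) : Equiv.Perm ℤ :=
  ((List.range' s k).map fun a : ℕ => swL ((a : ℤ) + 1) (rowL n S ((a : ℤ) + 1))).prod

private lemma WB_zero (n : ℕ) (S : Finset (ℤ × ℤ)) (s : ℕ) : WB n S s 0 = 1 := rfl

private lemma WB_succ (n : ℕ) (S : Finset (ℤ × ℤ)) (s k : ℕ) :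
    WB n S s (k + 1) = swL ((s : ℤ) + 1) (rowL n S ((s : ℤ) + 1)) * WB n S (s + 1) k := by
  rw [WB, List.range'_succ, List.map_cons, List.prod_cons]
  rfl

private lemma WB_append (n : ℕ) (S : Finset (ℤ × ℤ)) (s k₁ k₂ : ℕ) :
    WB n S s (k₁ + k₂) = WB n S s k₁ * WB n S (s + k₁) k₂ := by
  unfold WB
  rw [show List.range' s (k₁ + k₂) = List.range' s k₁ ++ List.range' (s + k₁) k₂ by
      rw [List.range'_append_1],
    List.map_append, List.prod_append]

private lemma flat_aux (n : ℕ) (S : Finset (ℤ × ℤ)) : ∀ (l : List ℕ),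
    (((l.flatMap fun a => (jList n).map fun c => ((a : ℤ) + 1, c)).filter
        fun p => decide (p ∈ S)).map fun p => Equiv.swap p.1 p.2).prod
      = (l.map fun a : ℕ => swL ((a : ℤ) + 1) (rowL n S ((a : ℤ) + 1))).prod
  | [] => rfl
  | a :: l => by
    rw [coeL, List.map_cons (f := fun a : ℕ => (a : ℤ)), List.flatMap_cons, ← coeL, List.filter_append, List.map_append, List.prod_append, flat_aux n S l,
      List.map_cons, List.prod_cons]
    congr 1
    rw [List.filter_map, List.map_map, swL, rowL]
    rfl

private lemma wPerm_eq_WB (n : ℕ) (S : Finset (ℤ × ℤ)) : wPerm n S = WB n S 0 n := by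
  rw [wPerm, posList, WB, List.range_eq_range']
  exact flat_aux n S (List.range' 0 n)

end StmtAux

/-- For `(i,j) ∈ P`: `|r(i,j)| ≥ i` and `|r(i,j)| ⩽̇ −j` in the order `⋖`. -/
theorem stmt5 (n : ℕ) (O : Finset (ℤ × ℤ)) (hA : Aset n ⊆ O) (hO : O ⊆ Pfin n)
    (i j : ℤ) (hp : inP n (i, j)) :
    i ≤ |rMap n O i j| ∧ ordKey n |rMap n O i j| ≤ ordKey n (-j) := by
  classical
  have hp' : 1 ≤ i ∧ i ≤ (n : ℤ) ∧ i ≤ |j| ∧ |j| ≤ (n : ℤ) := hp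
  obtain ⟨hi1, hin, hij, hjn⟩ := hp'
  have hjcase : (0 < j ∧ |j| = j) ∨ (j < 0 ∧ |j| = -j) := by
    rcases abs_cases j with ⟨h1, h2⟩ | ⟨h1, h2⟩
    · left; constructor <;> omega
    · right; constructor <;> omega
  have hjmem : j ∈ jList n := by
    rw [mem_jList]
    rcases hjcase with ⟨h1, h2⟩ | ⟨h1, h2⟩
    · left; omega
    · right; omega
  have hOb : ∀ x y : ℤ, (x, y) ∈ O → 1 ≤ x ∧ x ≤ (n : ℤ) ∧ x ≤ |y| ∧ |y| ≤ (n : ℤ) := by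
    intro x y h
    exact (Finset.mem_filter.mp (hO h)).2
  have hOpos : ∀ x y : ℤ, (x, y) ∈ O → (x, y) ∈ posList n := by
    intro x y h
    exact List.mem_toFinset.mp (Finset.mem_filter.mp (hO h)).1
  have hOj : ∀ x y : ℤ, (x, y) ∈ O → y ∈ jList n := by
    intro x y h
    exact (mem_posList.mp (hOpos x y h)).2.2
  have hprin : ∀ x y : ℤ,
      ((x, y) ∈ princ n (i, j) ↔ ((x, y) ∈ Pfin n ∧ x ≤ i ∧ ordKey n y ≤ ordKey n j)) := by
    intro x y
    rw [princ, Finset.mem_filter]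
    exact Iff.rfl
  have hij_Pfin : (i, j) ∈ Pfin n := by
    rw [Pfin, Finset.mem_filter, List.mem_toFinset, mem_posList]
    exact ⟨⟨hi1, hin, hjmem⟩, hp⟩
  have hij_princ : (i, j) ∈ princ n (i, j) := (hprin i j).mpr ⟨hij_Pfin, le_refl _, le_refl _⟩
  have hsnd_jList : ∀ q : ℤ × ℤ, q ∈ Pfin n → q.2 ∈ jList n := by
    rintro ⟨x, y⟩ hq
    rw [Pfin, Finset.mem_filter, List.mem_toFinset] at hq
    exact (mem_posList.mp hq.1).2.2
  have hmax : maxPrec n (princ n (i, j)) = {(i, j)} := by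
    apply Finset.ext
    intro q
    simp only [maxPrec, Finset.mem_filter, Finset.mem_singleton]
    constructor
    · rintro ⟨hq, hmx⟩
      obtain ⟨x, y⟩ := q
      have h1 := (hprin x y).mp hq
      exact (hmx (i, j) hij_princ ⟨h1.2.1, h1.2.2⟩).symm
    · rintro rfl
      refine ⟨hij_princ, ?_⟩
      rintro ⟨x, y⟩ hq hle
      have h1 := (hprin x y).mp hq
      have hle1 : i ≤ x := hle.1
      have hle2 : ordKey n j ≤ ordKey n y := hle.2
      rw [Prod.mk.injEq]
      constructor
      · omega
      · have hyj : y ∈ jList n := hsnd_jList (x, y) h1.1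
        exact (ordKey_inj hjmem hyj (by omega)).symm
  set M := MO n O (princ n (i, j)) with hMdef
  have hMeq : M = (princ n (i, j) ∩ O) ∪ {(i, j)} := by rw [hMdef, MO, hmax]
  have hMrow_lt : ∀ x y : ℤ, x < i →
      ((x, y) ∈ M ↔ ((x, y) ∈ O ∧ ordKey n y ≤ ordKey n j)) := by
    intro x y hx
    rw [hMeq, Finset.mem_union, Finset.mem_inter, Finset.mem_singleton, Prod.mk.injEq]
    constructor
    · rintro (⟨h1, h2⟩ | ⟨h1, h2⟩)
      · exact ⟨h2, ((hprin x y).mp h1).2.2⟩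
      · omega
    · rintro ⟨h1, h2⟩
      left
      exact ⟨(hprin x y).mpr ⟨hO h1, by omega, h2⟩, h1⟩
  have hMrow_i : ∀ y : ℤ, y ∈ jList n →
      ((i, y) ∈ M ↔ (((i, y) ∈ O ∧ ordKey n y ≤ ordKey n j) ∨ y = j)) := by
    intro y hy
    rw [hMeq, Finset.mem_union, Finset.mem_inter, Finset.mem_singleton, Prod.mk.injEq]
    constructor
    · rintro (⟨h1, h2⟩ | ⟨h1, h2⟩)
      · exact Or.inl ⟨h2, ((hprin i y).mp h1).2.2⟩
      · exact Or.inr h2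
    · rintro (⟨h1, h2⟩ | rfl)
      · exact Or.inl ⟨(hprin i y).mpr ⟨hO h1, le_refl _, h2⟩, h1⟩
      · exact Or.inr ⟨rfl, rfl⟩
  have hMrow_gt : ∀ x y : ℤ, i < x → (x, y) ∉ M := by
    intro x y hx hmem
    rw [hMeq, Finset.mem_union, Finset.mem_inter, Finset.mem_singleton, Prod.mk.injEq] at hmem
    rcases hmem with ⟨h1, _⟩ | ⟨h1, _⟩
    · have := ((hprin x y).mp h1).2.1; omega
    · omega
  -- the split point
  set iN1 := (i - 1).toNat with hiN1def
  have hiN1 : (iN1 : ℤ) = i - 1 := Int.toNat_of_nonneg (by omega)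
  obtain ⟨kk, hkk⟩ : ∃ kk, n = iN1 + (kk + 1) := ⟨n - iN1 - 1, by omega⟩
  have hcast : ((iN1 : ℕ) : ℤ) + 1 = i := by omega
  -- Phase A: rows below i act identically for O and M
  have phA : ∀ m : ℕ, m ≤ iN1 → ∀ v : ℤ, ordKey n v ≤ ordKey n j → (m : ℤ) + 1 ≤ |v| →
      |v| ≤ (n : ℤ) → WB n O 0 m v = WB n M 0 m v := by
    intro m
    induction m with
    | zero => intro _ v _ _ _; rfl
    | succ m ih =>
      intro hm v hkv hv1 hv2
      have hrlt : ((m : ℤ) + 1) < i := by omega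
      have hvr : v ≠ (m : ℤ) + 1 := by
        rcases abs_cases v with ⟨h1, h2⟩ | ⟨h1, h2⟩ <;> omega
      have hrowM : rowL n M ((m : ℤ) + 1) = (jList n).filter
          (fun c => decide (((m : ℤ) + 1, c) ∈ O) && decide (ordKey n c ≤ ordKey n j)) := by
        apply List.filter_congr
        intro c hc
        rw [Bool.eq_iff_iff]
        simp only [Bool.and_eq_true, decide_eq_true_eq]
        exact hMrow_lt _ c hrlt
      have hrowO : rowL n O ((m : ℤ) + 1) = rowL n M ((m : ℤ) + 1) ++ (jList n).filter
          (fun c => decide (((m : ℤ) + 1, c) ∈ O) && !decide (ordKey n c ≤ ordKey n j)) := by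
        rw [hrowM]
        exact filter_split_key n (ordKey n j) _ (jList n) (jList_pairwise n)
      have hnm : v ∉ (jList n).filter
          (fun c => decide (((m : ℤ) + 1, c) ∈ O) && !decide (ordKey n c ≤ ordKey n j)) := by
        intro hvmem
        rw [List.mem_filter] at hvmem
        simp only [Bool.and_eq_true, decide_eq_true_eq, Bool.not_eq_true',
          decide_eq_false_iff_not] at hvmem
        exact hvmem.2.2 hkv
      have hstep : swL ((m : ℤ) + 1) (rowL n O ((m : ℤ) + 1)) v
          = swL ((m : ℤ) + 1) (rowL n M ((m : ℤ) + 1)) v := by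
        rw [hrowO, swL_append, Equiv.Perm.mul_apply, swL_apply_notmem hvr hnm]
      have hKm : (m : ℤ) + 2 ≤ ordKey n j := by
        refine le_trans ?_ hkv
        simp only [ordKey]
        split_ifs with hv0 <;> rcases abs_cases v with ⟨h1, h2⟩ | ⟨h1, h2⟩ <;> omega
      set u := swL ((m : ℤ) + 1) (rowL n M ((m : ℤ) + 1)) v with hudef
      obtain ⟨hu1, hu2, hu3⟩ : ordKey n u ≤ ordKey n j ∧ (m : ℤ) + 1 ≤ |u| ∧ |u| ≤ (n : ℤ) := by
        rcases swL_apply_mem ((m : ℤ) + 1) (l := rowL n M ((m : ℤ) + 1)) v with h | h | h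
        · rw [← hudef] at h
          rw [h]
          exact ⟨hkv, by omega, hv2⟩
        · rw [← hudef] at h
          rw [h]
          refine ⟨?_, ?_, ?_⟩
          · simp only [ordKey]
            rw [if_pos (by omega)]
            omega
          · rcases abs_cases ((m : ℤ) + 1) with ⟨h1, h2⟩ | ⟨h1, h2⟩ <;> omega
          · rcases abs_cases ((m : ℤ) + 1) with ⟨h1, h2⟩ | ⟨h1, h2⟩ <;> omega
        · rw [← hudef] at h
          rw [hrowM, List.mem_filter] at h
          simp only [Bool.and_eq_true, decide_eq_true_eq] at h
          have hb := hOb _ _ h.2.1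
          exact ⟨h.2.2, hb.2.2.1, hb.2.2.2⟩
      have eRow : ∀ S : Finset (ℤ × ℤ), WB n S 0 (m + 1) v
          = WB n S 0 m (swL ((m : ℤ) + 1) (rowL n S ((m : ℤ) + 1)) v) := by
        intro S
        have h0 : (0 + m : ℕ) = m := by omega
        rw [WB_append n S 0 m 1, h0, WB_succ, WB_zero, mul_one, Equiv.Perm.mul_apply]
      rw [eRow O, eRow M, hstep, ← hudef]
      exact ih (by omega) u hu1 hu2 hu3
  -- Phase B: rows ≥ i, inverse action, with the invariant
  have phB : ∀ k m : ℕ, iN1 ≤ m → m + k = n → ∀ v : ℤ,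
      ((0 < j → i ≤ |v| ∧ |v| ≤ (n : ℤ)) ∧
        (j < 0 → (j ≤ v ∧ v ≤ -i) ∨ (i ≤ v ∧ v ≤ (m : ℤ) ∧ v ≤ -j))) →
      i ≤ |(WB n O m k)⁻¹ v| ∧ |(WB n O m k)⁻¹ v| ≤ 2 * (n : ℤ) + 1 - ordKey n j := by
    intro k
    induction k with
    | zero =>
      rintro m hm1 hm2 v ⟨hposi, hnegi⟩
      rw [WB_zero, inv_one, Equiv.Perm.one_apply]
      rcases hjcase with ⟨h0, habsj⟩ | ⟨h0, habsj⟩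
      · obtain ⟨ha, hb⟩ := hposi h0
        have hKv : ordKey n j = j := by
          simp only [ordKey]; rw [if_pos h0]
        rw [hKv]
        omega
      · have hKv : ordKey n j = 2 * n + 1 + j := by
          simp only [ordKey]; rw [if_neg (by omega)]
        rw [hKv]
        rcases hnegi h0 with ⟨h1', h2'⟩ | ⟨h1', h2', h3'⟩ <;>
          rcases abs_cases v with ⟨ha1, ha2⟩ | ⟨ha1, ha2⟩ <;> omega
    | succ k ih =>
      rintro m hm1 hm2 v ⟨hposi, hnegi⟩
      rw [WB_succ, mul_inv_rev, Equiv.Perm.mul_apply]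
      set u := (swL ((m : ℤ) + 1) (rowL n O ((m : ℤ) + 1)))⁻¹ v with hudef
      have hrn : ((m : ℤ) + 1) ≤ (n : ℤ) := by omega
      have hri : i ≤ (m : ℤ) + 1 := by omega
      refine ih (m + 1) (by omega) (by omega) u ⟨?_, ?_⟩
      · intro h0
        obtain ⟨ha, hb⟩ := hposi h0
        rcases swL_inv_mem ((m : ℤ) + 1) (l := rowL n O ((m : ℤ) + 1)) v with h | h | h
        · rw [← hudef] at h; rw [h]; exact ⟨ha, hb⟩
        · rw [← hudef] at h; rw [h]
          constructor <;>
            (rcases abs_cases ((m : ℤ) + 1) with ⟨h1, h2⟩ | ⟨h1, h2⟩ <;> omega)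
        · rw [← hudef] at h
          have hb' := hOb _ _ (mem_rowL.mp h).2
          exact ⟨by omega, hb'.2.2.2⟩
      · intro h0
        have hjn' : -(n : ℤ) ≤ j := by rcases hjcase with ⟨h1, h2⟩ | ⟨h1, h2⟩ <;> omega
        rcases hnegi h0 with ⟨h1', h2'⟩ | ⟨h1', h2', h3'⟩
        · -- v is negative
          have hvne : v ≠ (m : ℤ) + 1 := by omega
          by_cases hvm : v ∈ rowL n O ((m : ℤ) + 1)
          · have hb' := hOb _ _ (mem_rowL.mp hvm).2
            have hrv : (m : ℤ) + 1 ≤ -v := by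
              rcases abs_cases v with ⟨ha1, ha2⟩ | ⟨ha1, ha2⟩ <;> omega
            rcases swL_inv_sorted n (rowL_pairwise n O ((m : ℤ) + 1)) hvne
              with h | h | ⟨hmem, hkey⟩
            · rw [← hudef] at h; left; rw [h]; exact ⟨h1', h2'⟩
            · rw [← hudef] at h; right; rw [h]
              refine ⟨hri, by push_cast; omega, by omega⟩
            · rw [← hudef] at hmem hkey
              left
              have hb'' := hOb _ _ (mem_rowL.mp hmem).2
              have hujb := mem_jList.mp (mem_rowL.mp hmem).1
              simp only [ordKey] at hkey
              rw [if_neg (by omega : ¬ (0 : ℤ) < v)] at hkey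
              by_cases hu0 : (0 : ℤ) < u
              · rw [if_pos hu0] at hkey
                rcases hujb with ⟨hq1, hq2⟩ | ⟨hq1, hq2⟩ <;> omega
              · rw [if_neg hu0] at hkey
                have : (m : ℤ) + 1 ≤ -u := by
                  rcases abs_cases u with ⟨ha1, ha2⟩ | ⟨ha1, ha2⟩ <;> omega
                constructor <;> omega
          · left
            rw [hudef, swL_inv_notmem hvne hvm]
            exact ⟨h1', h2'⟩
        · -- v is positive
          have hvne : v ≠ (m : ℤ) + 1 := by omega
          have hvm : v ∉ rowL n O ((m : ℤ) + 1) := by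
            intro hmm
            have hb' := hOb _ _ (mem_rowL.mp hmm).2
            rcases abs_cases v with ⟨ha1, ha2⟩ | ⟨ha1, ha2⟩ <;> omega
          right
          rw [hudef, swL_inv_notmem hvne hvm]
          exact ⟨h1', by push_cast; omega, h3'⟩
  -- rows above i are empty in M
  have hMhigh : WB n M (iN1 + 1) kk = 1 := by
    apply List.prod_eq_one
    intro x hx
    simp only [List.mem_map] at hx
    obtain ⟨a, ha, rfl⟩ := hx
    rw [List.mem_range'_1] at ha
    have hempty : rowL n M ((a : ℤ) + 1) = [] := by
      rw [rowL, List.filter_eq_nil_iff]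
      intro c _
      simp only [decide_eq_true_eq]
      exact hMrow_gt _ c (by omega)
    rw [hempty, swL_nil]
  -- the row of M at i
  have hrowMi : rowL n M i = ((jList n).filter
      (fun c => decide ((i, c) ∈ O) && decide (ordKey n c ≤ ordKey n j - 1))) ++ [j] := by
    rw [rowL, filter_split_key n (ordKey n j - 1) _ (jList n) (jList_pairwise n)]
    congr 1
    · apply List.filter_congr
      intro c hc
      rw [Bool.eq_iff_iff]
      simp only [Bool.and_eq_true, decide_eq_true_eq]
      constructor
      · rintro ⟨hM', hle⟩
        rcases (hMrow_i c hc).mp hM' with ⟨hO', hle'⟩ | rfl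
        · exact ⟨hO', hle⟩
        · omega
      · rintro ⟨hO', hle⟩
        exact ⟨(hMrow_i c hc).mpr (Or.inl ⟨hO', by omega⟩), hle⟩
    · have hcongr : ∀ c ∈ jList n,
          (decide ((i, c) ∈ M) && !decide (ordKey n c ≤ ordKey n j - 1)) = decide (c = j) := by
        intro c hc
        rw [Bool.eq_iff_iff]
        simp only [Bool.and_eq_true, decide_eq_true_eq, Bool.not_eq_true',
          decide_eq_false_iff_not]
        constructor
        · rintro ⟨hM', hgt⟩
          rcases (hMrow_i c hc).mp hM' with ⟨hO', hle'⟩ | h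
          · exact ordKey_inj hc hjmem (by omega)
          · exact h
        · rintro rfl
          exact ⟨(hMrow_i c hc).mpr (Or.inr rfl), by omega⟩
      rw [List.filter_congr hcongr]
      exact filter_eq_single n (jList_pairwise n) hjmem
  have htrj : swL i ((jList n).filter
      (fun c => decide ((i, c) ∈ O) && decide (ordKey n c ≤ ordKey n j - 1))) j = j := by
    rcases eq_or_ne j i with hji | hji
    · have hKj : ordKey n j = i := by
        rw [hji]; simp only [ordKey]; rw [if_pos (by omega)]
      have hempty : (jList n).filter
          (fun c => decide ((i, c) ∈ O) && decide (ordKey n c ≤ ordKey n j - 1)) = [] := by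
        rw [List.filter_eq_nil_iff]
        intro c hc
        simp only [Bool.and_eq_true, decide_eq_true_eq, not_and]
        intro hOc
        have hb := hOb _ _ hOc
        have hcj := mem_jList.mp hc
        rw [hKj]
        rcases abs_cases c with ⟨ha1, ha2⟩ | ⟨ha1, ha2⟩ <;>
          (simp only [ordKey]; split_ifs <;> omega)
      rw [hempty, swL_nil, Equiv.Perm.one_apply]
    · apply swL_apply_notmem hji
      intro hmm
      rw [List.mem_filter] at hmm
      simp only [Bool.and_eq_true, decide_eq_true_eq] at hmm
      omega
  -- compute w_M applied to i
  have hwM : wPerm n M i = WB n O 0 iN1 j := by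
    have happ := WB_append n M 0 iN1 (kk + 1)
    rw [← hkk] at happ
    simp only [Nat.zero_add] at happ
    rw [wPerm_eq_WB, happ, WB_succ, hcast, hMhigh, mul_one, hrowMi, swL_append,
      Equiv.Perm.mul_apply, Equiv.Perm.mul_apply]
    have h1 : swL i [j] i = j := by
      rw [swL_cons, swL_nil, mul_one]
      exact Equiv.swap_apply_left i j
    rw [h1, htrj]
    exact (phA iN1 le_rfl j (le_refl _) (by omega) (by omega)).symm
  -- compute r(i,j)
  have hfin : rMap n O i j = (WB n O iN1 (kk + 1))⁻¹ j := by
    have happ := WB_append n O 0 iN1 (kk + 1)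
    rw [← hkk] at happ
    simp only [Nat.zero_add] at happ
    rw [rMap, wOJ, Equiv.Perm.mul_apply, ← hMdef, hwM, wPerm_eq_WB, happ, mul_inv_rev,
      Equiv.Perm.mul_apply, Equiv.Perm.inv_def (WB n O 0 iN1), Equiv.symm_apply_apply]
  have hinv0 : (0 < j → i ≤ |j| ∧ |j| ≤ (n : ℤ)) ∧
      (j < 0 → (j ≤ j ∧ j ≤ -i) ∨ (i ≤ j ∧ j ≤ (iN1 : ℤ) ∧ j ≤ -j)) := by
    constructor
    · intro _; exact ⟨hij, hjn⟩
    · intro h0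
      left
      refine ⟨le_refl _, ?_⟩
      rcases hjcase with ⟨h1, h2⟩ | ⟨h1, h2⟩ <;> omega
  obtain ⟨hb1, hb2⟩ := phB (kk + 1) iN1 le_rfl (by omega) j hinv0
  rw [← hfin] at hb1 hb2
  refine ⟨hb1, ?_⟩
  have habs : 0 < |rMap n O i j| := by omega
  have h1 : ordKey n |rMap n O i j| = |rMap n O i j| := by
    simp only [ordKey]; rw [if_pos habs]
  rw [h1]
  rcases hjcase with ⟨h0, habsj⟩ | ⟨h0, habsj⟩
  · have h2 : ordKey n (-j) = 2 * n + 1 + -j := by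
      simp only [ordKey]; rw [if_neg (by omega)]
    have h3 : ordKey n j = j := by
      simp only [ordKey]; rw [if_pos h0]
    rw [h2]; rw [h3] at hb2; omega
  · have h2 : ordKey n (-j) = -j := by
      simp only [ordKey]; rw [if_pos (by omega)]
    have h3 : ordKey n j = 2 * n + 1 + j := by
      simp only [ordKey]; rw [if_neg (by omega)]
    rw [h2]; rw [h3] at hb2; omega


end
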